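/- arXiv:0805.2917 — 4 statements merged into one kernel-verified Lean document; each statement's English description precedes it below -/
import Mathlib

section
/- Let l be a positive integer, let α = (α₁, α₂) ∈ ℝ_{≥0}^{2l} (with α₁, α₂ ∈ ℝ^l) be arranged in non-increasing order, and let β = (b₁·e_l, b₂·e_l) ∈ ℝ_{≥0}^{2l} with b₁ ≥ b₂ ≥ 0 (so β is arranged in non-increasing order, where e_l = (1,...,1) ∈ ℝ^l). If the sum of all entries of α is at least the sum of all entries of β, and the sum of the entries of α₁ is at least b₁·l, then β is submajorized by α. -/
open Matrix BigOperators
open scoped ComplexOrder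

noncomputable section

variable {𝕜 : Type*} [RCLike 𝕜]

/-- Sum of the `k` largest entries of a vector `x : Fin n → ℝ`,
as the supremum of the sums over subsets of cardinality `k`. -/
noncomputable def kMaxSum {n : ℕ} (x : Fin n → ℝ) (k : ℕ) : ℝ :=
  sSup ((fun t : Finset (Fin n) => ∑ i ∈ t, x i) '' {t : Finset (Fin n) | t.card = k})

/-- `x ≺_w y` : submajorization of real vectors. -/
def SubMajVec {n : ℕ} (x y : Fin n → ℝ) : Prop :=
  ∀ k : ℕ, k ≤ n → kMaxSum x k ≤ kMaxSum y k

/-- `A ≺_w B` : submajorization of self-adjoint matrices (via eigenvalues). -/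
def SubMajMat {n : ℕ} (A B : Matrix (Fin n) (Fin n) 𝕜) : Prop :=
  ∃ (hA : A.IsHermitian) (hB : B.IsHermitian), SubMajVec hA.eigenvalues hB.eigenvalues

/-- `A ≺ B` : majorization of self-adjoint matrices. -/
def MajMat {n : ℕ} (A B : Matrix (Fin n) (Fin n) 𝕜) : Prop :=
  SubMajMat A B ∧ A.trace = B.trace

/-- The q-potential `P_q(V) = Σ_{i,j} |V_i V_j*|²` of a reconstruction system. -/
noncomputable def qPotential {m l d : ℕ} (V : Fin m → Matrix (Fin l) (Fin d) 𝕜) :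
    Matrix (Fin l) (Fin l) 𝕜 :=
  ∑ i, ∑ j, (V i * (V j)ᴴ)ᴴ * (V i * (V j)ᴴ)

/-- `tr |A|² = tr(AᴴA)`, as a real number. -/
noncomputable def traceAbsSq {a b : ℕ} (A : Matrix (Fin a) (Fin b) 𝕜) : ℝ :=
  RCLike.re (Aᴴ * A).trace

/-- `tr |A| = tr((AᴴA)^{1/2})`, the sum of the singular values of `A`. -/
noncomputable def traceAbs {a b : ℕ} (A : Matrix (Fin a) (Fin b) 𝕜) : ℝ :=
  ∑ j, Real.sqrt ((Matrix.posSemidef_conjTranspose_mul_self A).1.eigenvalues j)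

/-- A unitarily invariant norm on `M_n(𝕜)`. -/
structure UINorm (n : ℕ) (𝕜 : Type*) [RCLike 𝕜] where
  N : Matrix (Fin n) (Fin n) 𝕜 → ℝ
  nonneg : ∀ A, 0 ≤ N A
  eq_zero : ∀ A, N A = 0 → A = 0
  triangle : ∀ A B, N (A + B) ≤ N A + N B
  smul_eq : ∀ (c : 𝕜) (A), N (c • A) = ‖c‖ * N A
  invariant : ∀ (A : Matrix (Fin n) (Fin n) 𝕜) (U W : Matrix.unitaryGroup (Fin n) 𝕜),
    N ((U : Matrix (Fin n) (Fin n) 𝕜) * A * (W : Matrix (Fin n) (Fin n) 𝕜)) = N A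

/-- `X ⊕ 0_t` : padding a square matrix with `t` zero rows and columns. -/
noncomputable def padMat {r : ℕ} (t : ℕ) (X : Matrix (Fin r) (Fin r) 𝕜) :
    Matrix (Fin (r + t)) (Fin (r + t)) 𝕜 :=
  Matrix.reindex finSumFinEquiv finSumFinEquiv (Matrix.fromBlocks X 0 0 0)

/-- A compatible unitarily invariant norm: a family of unitarily invariant norms,
one in each dimension, unchanged by adjoining zero rows and columns. -/
structure CUIN (𝕜 : Type*) [RCLike 𝕜] where
  N : ∀ n : ℕ, Matrix (Fin n) (Fin n) 𝕜 → ℝ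
  nonneg : ∀ n A, 0 ≤ N n A
  eq_zero : ∀ n A, N n A = 0 → A = 0
  triangle : ∀ n A B, N n (A + B) ≤ N n A + N n B
  smul_eq : ∀ n (c : 𝕜) (A), N n (c • A) = ‖c‖ * N n A
  invariant : ∀ n (A : Matrix (Fin n) (Fin n) 𝕜) (U W : Matrix.unitaryGroup (Fin n) 𝕜),
    N n ((U : Matrix (Fin n) (Fin n) 𝕜) * A * (W : Matrix (Fin n) (Fin n) 𝕜)) = N n A
  compatible : ∀ (r t : ℕ) (X : Matrix (Fin r) (Fin r) 𝕜), N (r + t) (padMat t X) = N r X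

namespace CUIN

/-- The associated symmetric gauge function, evaluated on a real vector:
`ψ(x) = ‖diag(x)‖`. -/
noncomputable def psi (Φ : CUIN 𝕜) {n : ℕ} (x : Fin n → ℝ) : ℝ :=
  Φ.N n (Matrix.diagonal fun i => (x i : 𝕜))

/-- `η_ψ(l) = ψ(e_l)/l = ‖I_l‖/l`. -/
noncomputable def eta (Φ : CUIN 𝕜) (l : ℕ) : ℝ := Φ.N l 1 / l

/-- A compatible u.i.n. is strict if `‖A‖ = tr(A)·η_ψ(l)` for positive semidefinite `A`
forces `A = (tr A / l)·I`. -/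
def Strict (Φ : CUIN 𝕜) : Prop :=
  ∀ (l : ℕ) (A : Matrix (Fin l) (Fin l) 𝕜), A.PosSemidef →
    Φ.N l A = RCLike.re A.trace * Φ.eta l → A = (A.trace / (l : 𝕜)) • 1

/-- A 2-strongly strict compatible u.i.n.: strict, and on `M_2` any two self-adjoint
matrices `A ≺ B` with equal norms are unitarily equivalent. -/
def TwoStronglyStrict (Φ : CUIN 𝕜) : Prop :=
  Φ.Strict ∧ ∀ A B : Matrix (Fin 2) (Fin 2) 𝕜, A.IsHermitian → B.IsHermitian →
    MajMat A B → Φ.N 2 A = Φ.N 2 B →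
    ∃ U ∈ Matrix.unitaryGroup (Fin 2) 𝕜, A = star U * B * U

end CUIN

/-- Worst-case reconstruction error for `p` lost packets:
`e_p^ψ(V) = max_{|K| = p} ‖V*V − V*E_K V‖ = max_{|K| = p} ‖Σ_{i ∈ K} Vᵢ*Vᵢ‖`. -/
noncomputable def errP {m l d : ℕ} (Φ : CUIN 𝕜) (p : ℕ)
    (V : Fin m → Matrix (Fin l) (Fin d) 𝕜) : ℝ :=
  sSup {r : ℝ | ∃ K : Finset (Fin m), K.card = p ∧ r = Φ.N d (∑ i ∈ K, (V i)ᴴ * V i)}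

/-- The constant `c_{m,l,d} = √( (d/((m−1)·m·l))·(1 − d/(ml)) )`. -/
noncomputable def cmld (m l d : ℕ) : ℝ :=
  Real.sqrt ((d : ℝ) / (((m : ℝ) - 1) * m * l) * (1 - (d : ℝ) / ((m : ℝ) * l)))

/-- A uniformly weighted projective rank-`l` `(m,l,d)`-protocol:
`Σᵢ Vᵢ*Vᵢ = I_d` and `VᵢVᵢ* = (d/(ml))·I_l` for every `i`. -/
def IsUWP {m l d : ℕ} (V : Fin m → Matrix (Fin l) (Fin d) 𝕜) : Prop :=
  (∑ i, (V i)ᴴ * V i = 1) ∧ ∀ i, V i * (V i)ᴴ = ((d : 𝕜) / ((m : 𝕜) * (l : 𝕜))) • 1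

/-- A uniformly weighted projective rank-`l` `(m,l,d)`-protocol, stated via projections:
`Σᵢ Vᵢ*Vᵢ = I_d` and `Vᵢ*Vᵢ = (d/(ml))·Pᵢ` with `Pᵢ` rank-`l` orthogonal projections. -/
def IsUWPProj {m l d : ℕ} (V : Fin m → Matrix (Fin l) (Fin d) 𝕜) : Prop :=
  (∑ i, (V i)ᴴ * V i = 1) ∧ ∀ i, ∃ P : Matrix (Fin d) (Fin d) 𝕜,
    Pᴴ = P ∧ P * P = P ∧ P.rank = l ∧ (V i)ᴴ * V i = ((d : 𝕜) / ((m : 𝕜) * (l : 𝕜))) • P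

/-- Padding a vector with zeros to length `d`. -/
def padVec {l : ℕ} (d : ℕ) (x : Fin l → ℝ) : Fin d → ℝ :=
  fun j => if h : (j : ℕ) < l then x ⟨j, h⟩ else 0

end

section AuxSubMaj
open Finset

lemma append_lt {l : ℕ} (x₁ x₂ : Fin l → ℝ) (i : Fin (l + l)) (h : (i : ℕ) < l) :
    Fin.append x₁ x₂ i = x₁ ⟨i, h⟩ := by
  conv_lhs => rw [show i = Fin.castAdd l ⟨(i : ℕ), h⟩ from by ext; simp]
  rw [Fin.append_left]

lemma append_ge {l : ℕ} (x₁ x₂ : Fin l → ℝ) (i : Fin (l + l)) (h : l ≤ (i : ℕ)) :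
    Fin.append x₁ x₂ i = x₂ ⟨(i : ℕ) - l, by have := i.2; omega⟩ := by
  conv_lhs => rw [show i = Fin.natAdd l ⟨(i : ℕ) - l, by have := i.2; omega⟩ from by ext; simp; omega]
  rw [Fin.append_right]

lemma sm_val_le {k n : ℕ} {g : Fin k → Fin n} (hg : StrictMono g) :
    ∀ m (hm : m < k), m ≤ (g ⟨m, hm⟩ : ℕ) := by
  intro m
  induction m with
  | zero => intro hm; exact Nat.zero_le _
  | succ j ih =>
    intro hm
    have h1 := ih (Nat.lt_of_succ_lt hm)
    have h2 : g ⟨j, Nat.lt_of_succ_lt hm⟩ < g ⟨j + 1, hm⟩ := hg (by simp [Fin.lt_def])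
    have h3 := Fin.lt_def.mp h2
    omega

/-- the "first k indices" finset -/
def headF {n : ℕ} {k : ℕ} (hk : k ≤ n) : Finset (Fin n) :=
  Finset.map (Fin.castLEEmb hk) Finset.univ

lemma mem_headF {n k : ℕ} (hk : k ≤ n) (i : Fin n) : i ∈ headF hk ↔ (i : ℕ) < k := by
  simp only [headF, Finset.mem_map, Finset.mem_univ, true_and, Fin.coe_castLEEmb]
  constructor
  · rintro ⟨a, rfl⟩; exact a.2
  · intro h; exact ⟨⟨(i : ℕ), h⟩, by ext; simp⟩

lemma card_headF {n k : ℕ} (hk : k ≤ n) : (headF hk).card = k := by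
  simp [headF]

lemma sum_headF {n k : ℕ} (hk : k ≤ n) (x : Fin n → ℝ) :
    ∑ i ∈ headF hk, x i = ∑ i : Fin k, x (Fin.castLE hk i) := by
  simp [headF, Finset.sum_map]

/-- any k-subset sum is at most the head sum, for antitone x -/
lemma sum_le_sum_headF {n : ℕ} {x : Fin n → ℝ} (hx : Antitone x) (t : Finset (Fin n))
    (hk : t.card ≤ n) : ∑ i ∈ t, x i ≤ ∑ i ∈ headF hk, x i := by
  rw [sum_headF]
  have ht : t = Finset.map (t.orderEmbOfFin rfl).toEmbedding Finset.univ := by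
    ext a
    simp only [Finset.mem_map, Finset.mem_univ, true_and, RelEmbedding.coe_toEmbedding]
    rw [show (∃ b, t.orderEmbOfFin rfl b = a) ↔ a ∈ Set.range (t.orderEmbOfFin rfl) from Iff.rfl,
      Finset.range_orderEmbOfFin]
    simp
  conv_lhs => rw [ht]
  rw [Finset.sum_map]
  apply Finset.sum_le_sum
  intro i _
  apply hx
  rw [Fin.le_def]
  exact sm_val_le (t.orderEmbOfFin rfl).strictMono i i.2

lemma kMaxSum_le {n : ℕ} (x : Fin n → ℝ) {k : ℕ} (hk : k ≤ n) {c : ℝ}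
    (h : ∀ t : Finset (Fin n), t.card = k → ∑ i ∈ t, x i ≤ c) : kMaxSum x k ≤ c := by
  apply csSup_le
  · exact ⟨_, ⟨headF hk, card_headF hk, rfl⟩⟩
  · rintro r ⟨t, ht, rfl⟩; exact h t ht

lemma le_kMaxSum {n : ℕ} (x : Fin n → ℝ) (t : Finset (Fin n)) :
    ∑ i ∈ t, x i ≤ kMaxSum x t.card := by
  apply le_csSup
  · exact ((Set.toFinite _).image _).bddAbove
  · exact ⟨t, rfl, rfl⟩

/-- averaging: for antitone x on Fin n, n * (head k sum) ≥ k * total -/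
lemma avg_head {n k : ℕ} (hk : k ≤ n) {x : Fin n → ℝ} (hx : Antitone x) :
    (k : ℝ) * ∑ i, x i ≤ (n : ℝ) * ∑ i ∈ headF hk, x i := by
  have key : 0 ≤ ∑ i ∈ headF hk, ∑ j ∈ (headF hk)ᶜ, (x i - x j) := by
    apply Finset.sum_nonneg; intro i hi
    apply Finset.sum_nonneg; intro j hj
    have hi' := (mem_headF hk i).mp hi
    have hj' : ¬ (j : ℕ) < k := fun h => (Finset.mem_compl.mp hj) ((mem_headF hk j).mpr h)
    have : x j ≤ x i := hx (by rw [Fin.le_def]; omega)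
    linarith
  have expand : ∑ i ∈ headF hk, ∑ j ∈ (headF hk)ᶜ, (x i - x j)
      = ((headF hk)ᶜ.card : ℝ) * ∑ i ∈ headF hk, x i
        - ((headF hk).card : ℝ) * ∑ j ∈ (headF hk)ᶜ, x j := by
    simp only [Finset.sum_sub_distrib, Finset.sum_const, nsmul_eq_mul, ← Finset.mul_sum]
  have hcc : (headF hk)ᶜ.card = n - k := by
    rw [Finset.card_compl, card_headF]; simp
  have hsplit : ∑ i ∈ headF hk, x i + ∑ i ∈ (headF hk)ᶜ, x i = ∑ i, x i :=
    Finset.sum_add_sum_compl _ _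
  rw [expand, hcc, card_headF] at key
  have : ((n - k : ℕ) : ℝ) = (n : ℝ) - k := by
    rw [Nat.cast_sub hk]
  rw [this] at key
  nlinarith [key, hsplit]

end AuxSubMaj

theorem stmt0 (l : ℕ) (hl : 0 < l) (α₁ α₂ : Fin l → ℝ) (b₁ b₂ : ℝ)
    (hα_nonneg : ∀ i : Fin (l + l), 0 ≤ Fin.append α₁ α₂ i)
    (hα_dec : Antitone (Fin.append α₁ α₂))
    (hb : b₂ ≤ b₁) (hb₂ : 0 ≤ b₂)
    (htr : (l : ℝ) * b₁ + (l : ℝ) * b₂ ≤ ∑ i, Fin.append α₁ α₂ i)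
    (htr₁ : (l : ℝ) * b₁ ≤ ∑ i, α₁ i) :
    SubMajVec (Fin.append (Function.const (Fin l) b₁) (Function.const (Fin l) b₂))
      (Fin.append α₁ α₂) := by
  intro k hk
  set x := Fin.append α₁ α₂ with hxdef
  set β := Fin.append (Function.const (Fin l) b₁) (Function.const (Fin l) b₂) with hβdef
  have hβ_anti : Antitone β := by
    intro i j hij
    rcases Nat.lt_or_ge (j : ℕ) l with hj | hj
    · have hi : (i : ℕ) < l := lt_of_le_of_lt (Fin.le_def.mp hij) hj
      rw [hβdef, append_lt _ _ _ hi, append_lt _ _ _ hj]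
      exact le_rfl
    · rcases Nat.lt_or_ge (i : ℕ) l with hi | hi
      · rw [hβdef, append_lt _ _ _ hi, append_ge _ _ _ hj]; exact hb
      · rw [hβdef, append_ge _ _ _ hi, append_ge _ _ _ hj]
        exact le_rfl
  have h1 : kMaxSum β k ≤ ∑ i ∈ headF hk, β i := by
    apply kMaxSum_le β hk
    intro t ht
    subst ht
    exact sum_le_sum_headF hβ_anti t hk
  have h2 : ∑ i ∈ headF hk, x i ≤ kMaxSum x k := by
    have := le_kMaxSum x (headF hk)
    rwa [card_headF] at this
  have hα₁ : Antitone α₁ := by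
    intro i j hij
    have h := hα_dec (show Fin.castAdd l i ≤ Fin.castAdd l j by
      rw [Fin.le_def]; exact hij)
    rwa [hxdef, Fin.append_left, Fin.append_left] at h
  have hα₂ : Antitone α₂ := by
    intro i j hij
    have h := hα_dec (show Fin.natAdd l i ≤ Fin.natAdd l j by
      rw [Fin.le_def]; simpa using hij)
    rwa [hxdef, Fin.append_right, Fin.append_right] at h
  have hsum : ∑ i, x i = ∑ i, α₁ i + ∑ i, α₂ i := by
    rw [hxdef, Fin.sum_univ_add]
    congr 1
    · simp [Fin.append_left]
    · apply Finset.sum_congr rfl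
      intro i _
      rw [append_ge _ _ _ (by simp)]
      congr 1
      ext
      simp
  have hl' : (0 : ℝ) < l := by exact_mod_cast hl
  refine le_trans h1 (le_trans ?_ h2)
  rcases le_or_gt k l with hkl | hkl
  · -- k ≤ l
    have hβh : ∑ i ∈ headF hk, β i = (k : ℝ) * b₁ := by
      rw [sum_headF]
      have hc : ∀ i : Fin k, β (Fin.castLE hk i) = b₁ := fun i => by
        rw [hβdef, append_lt _ _ _ (lt_of_lt_of_le i.2 hkl)]; rfl
      rw [Finset.sum_congr rfl (fun i _ => hc i)]
      simp [mul_comm]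
    have hx : ∑ i ∈ headF hk, x i = ∑ i ∈ headF hkl, α₁ i := by
      rw [sum_headF, sum_headF]
      apply Finset.sum_congr rfl
      intro i _
      rw [hxdef, append_lt _ _ _ (lt_of_lt_of_le i.2 hkl)]
      rfl
    have hav := avg_head hkl hα₁
    rw [hβh, hx]
    have hknn : (0 : ℝ) ≤ k := by positivity
    nlinarith [mul_nonneg hknn (sub_nonneg.mpr htr₁)]
  · -- l < k
    have hll : l ≤ l + l := Nat.le_add_right l l
    have hjl : k - l ≤ l := by omega
    have hsub : headF hll ⊆ headF hk := by
      intro i hi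
      rw [mem_headF] at hi ⊢
      omega
    have hsplit : ∑ i ∈ headF hk, x i
        = ∑ i ∈ headF hk \ headF hll, x i + ∑ i ∈ headF hll, x i :=
      (Finset.sum_sdiff hsub).symm
    have hsplitβ : ∑ i ∈ headF hk, β i
        = ∑ i ∈ headF hk \ headF hll, β i + ∑ i ∈ headF hll, β i :=
      (Finset.sum_sdiff hsub).symm
    have hD : headF hk \ headF hll = Finset.map ⟨Fin.natAdd l,
        Fin.natAdd_injective l l⟩ (headF hjl) := by
      ext i
      simp only [Finset.mem_sdiff, mem_headF, Finset.mem_map, Function.Embedding.coeFn_mk]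
      constructor
      · rintro ⟨hik, hil⟩
        refine ⟨⟨(i : ℕ) - l, by omega⟩, ?_, ?_⟩
        · show (i : ℕ) - l < k - l
          omega
        · ext
          simp only [Fin.coe_natAdd]
          omega
      · rintro ⟨a, ha, rfl⟩
        simp only [Fin.coe_natAdd]
        omega
    have hfirst : ∑ i ∈ headF hll, x i = ∑ i, α₁ i := by
      rw [sum_headF]
      apply Finset.sum_congr rfl
      intro i _
      rw [hxdef, append_lt _ _ _ (show ((Fin.castLE hll i : Fin (l+l)) : ℕ) < l from i.2)]
      rfl
    have hfirstβ : ∑ i ∈ headF hll, β i = (l : ℝ) * b₁ := by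
      rw [sum_headF]
      have hc : ∀ i : Fin l, β (Fin.castLE hll i) = b₁ := fun i => by
        rw [hβdef, append_lt _ _ _ (show ((Fin.castLE hll i : Fin (l+l)) : ℕ) < l from i.2)]; rfl
      rw [Finset.sum_congr rfl (fun i _ => hc i)]
      simp [mul_comm]
    have hsecond : ∑ i ∈ headF hk \ headF hll, x i = ∑ a ∈ headF hjl, α₂ a := by
      rw [hD, Finset.sum_map]
      apply Finset.sum_congr rfl
      intro a _
      simp only [Function.Embedding.coeFn_mk]
      rw [hxdef, Fin.append_right]
    have hsecondβ : ∑ i ∈ headF hk \ headF hll, β i = ((k - l : ℕ) : ℝ) * b₂ := by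
      rw [hD, Finset.sum_map]
      have hc : ∀ a : Fin l, β (Fin.natAdd l a) = b₂ := fun a => by
        rw [hβdef, Fin.append_right]; rfl
      simp only [Function.Embedding.coeFn_mk]
      rw [Finset.sum_congr rfl (fun a _ => hc a)]
      rw [Finset.sum_const, card_headF, nsmul_eq_mul]
    have hav := avg_head hjl hα₂
    rw [hsplit, hsplitβ, hfirst, hfirstβ, hsecond, hsecondβ]
    rw [hsum] at htr
    have hcast : ((k - l : ℕ) : ℝ) = (k : ℝ) - l := by
      rw [Nat.cast_sub (le_of_lt hkl)]
    rw [hcast] at hav ⊢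
    have hjnn : (0 : ℝ) ≤ (k : ℝ) - l := by
      have : (l : ℝ) ≤ k := by exact_mod_cast le_of_lt hkl
      linarith
    have hlj : (k : ℝ) - l ≤ l := by
      have : (k : ℝ) ≤ l + l := by exact_mod_cast hk
      linarith
    nlinarith [mul_nonneg (sub_nonneg.mpr hlj) (sub_nonneg.mpr htr₁),
      mul_nonneg hjnn (sub_nonneg.mpr htr)]
end

section
/- If {V_i}_{i=1}^m is a projective rank-l (m,l,d)-protocol, then P_q(V) = (d/l)·I_l; in particular the majorization (d/l)·I_l ≺ P_q(V) holds, and for every unitarily invariant norm ‖·‖ on M_l(ℂ) one has ‖P_q(V)‖ = d·η_ψ(l), and tr(f(P_q(V))) = l·f(d/l) for every increasing convex f : ℝ_{≥0} → ℝ with f(0) = 0. -/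
open Matrix BigOperators
open scoped ComplexOrder

open scoped ComplexOrder in
private lemma eig_of_eq_smul_one {n : ℕ} {A : Matrix (Fin n) (Fin n) ℂ} {c : ℝ}
    (hAc : A = (c : ℂ) • 1) (hA : A.IsHermitian) (i : Fin n) : hA.eigenvalues i = c := by
  set U := (Matrix.IsHermitian.eigenvectorUnitary hA : Matrix (Fin n) (Fin n) ℂ) with hUdef
  have hst := hA.spectral_theorem
  have hU1 : star U * U = 1 := (Matrix.IsHermitian.eigenvectorUnitary hA).2.1
  have hD : Matrix.diagonal (RCLike.ofReal ∘ hA.eigenvalues) = (c : ℂ) • (1 : Matrix (Fin n) (Fin n) ℂ) := by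
    have h1 : star U * A * U = Matrix.diagonal (RCLike.ofReal ∘ hA.eigenvalues) := by
      calc star U * A * U
          = star U * (U * Matrix.diagonal (RCLike.ofReal ∘ hA.eigenvalues) * star U) * U := by
            exact (congrArg (fun X => star U * X * U) hst).trans rfl
        _ = (star U * U) * Matrix.diagonal (RCLike.ofReal ∘ hA.eigenvalues) * (star U * U) := by
            simp [Matrix.mul_assoc]
        _ = _ := by rw [hU1]; simp
    rw [← h1, hAc]
    simp [Matrix.mul_smul, Matrix.smul_mul, hU1]
  have := congrFun (congrFun hD i) i
  simp [Matrix.diagonal_apply_eq] at this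
  exact_mod_cast this

open scoped ComplexOrder in
private lemma key_VVH {l d : ℕ} (A : Matrix (Fin l) (Fin d) ℂ) (w : ℝ) (hw : 0 < w)
    (P : Matrix (Fin d) (Fin d) ℂ) (hP2 : P * P = P) (hrank : P.rank = l)
    (hA : Aᴴ * A = (w : ℂ) • P) : A * Aᴴ = (w : ℂ) • 1 := by
  have hw0 : (w : ℂ) ≠ 0 := by exact_mod_cast hw.ne'
  set B := A * Aᴴ with hBdef
  have hrB : B.rank = l := by
    rw [hBdef, Matrix.rank_self_mul_conjTranspose, ← Matrix.rank_conjTranspose_mul_self, hA]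
    have h1 : (w : ℂ) • P = ((w : ℂ) • (1 : Matrix (Fin d) (Fin d) ℂ)) * P := by
      rw [Matrix.smul_mul, one_mul]
    have hdet : IsUnit ((w : ℂ) • (1 : Matrix (Fin d) (Fin d) ℂ)).det := by
      simp [Matrix.det_smul, hw0]
    rw [h1, Matrix.rank_mul_eq_right_of_isUnit_det _ _ hdet, hrank]
  have hUnit : IsUnit B := by
    rw [← Matrix.mulVec_surjective_iff_isUnit]
    have htop : LinearMap.range B.mulVecLin = ⊤ := by
      apply Submodule.eq_top_of_finrank_eq
      rw [show Module.finrank ℂ (LinearMap.range B.mulVecLin) = B.rank from rfl, hrB]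
      simp [Module.finrank_pi]
    intro v
    obtain ⟨x, hx⟩ := LinearMap.range_eq_top.mp htop v
    exact ⟨x, hx⟩
  have h2 : B * B = (w : ℂ) • (A * P * Aᴴ) := by
    have : B * B = A * (Aᴴ * A) * Aᴴ := by simp [hBdef, Matrix.mul_assoc]
    rw [this, hA, Matrix.mul_smul, Matrix.smul_mul]
  have hc : B * (A * P * Aᴴ) = (w : ℂ) • (A * P * Aᴴ) := by
    calc B * (A * P * Aᴴ) = A * (Aᴴ * A) * (P * Aᴴ) := by simp [hBdef, Matrix.mul_assoc]
      _ = ((w : ℂ) • (A * (P * P) * Aᴴ)) := by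
          rw [hA, Matrix.mul_smul, Matrix.smul_mul]
          congr 1
          simp [Matrix.mul_assoc]
      _ = (w : ℂ) • (A * P * Aᴴ) := by rw [hP2]
  have h3 : B * (B * B) = ((w : ℂ) • (1 : Matrix (Fin l) (Fin l) ℂ)) * (B * B) := by
    calc B * (B * B) = (w : ℂ) • (B * (A * P * Aᴴ)) := by rw [h2, Matrix.mul_smul]
      _ = (w : ℂ) • ((w : ℂ) • (A * P * Aᴴ)) := by rw [hc]
      _ = ((w : ℂ) • (1 : Matrix (Fin l) (Fin l) ℂ)) * ((w : ℂ) • (A * P * Aᴴ)) := by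
          rw [Matrix.smul_mul, one_mul]
      _ = ((w : ℂ) • (1 : Matrix (Fin l) (Fin l) ℂ)) * (B * B) := by rw [h2]
  have hBB : IsUnit (B * B) := hUnit.mul hUnit
  exact hBB.mul_right_cancel h3


theorem stmt3 (m l d : ℕ) (hl : 0 < l) (hld : l < d)
    (V : Fin m → Matrix (Fin l) (Fin d) ℂ)
    (hproto : ∑ i, (V i)ᴴ * V i = 1)
    (hprojective : ∀ i, ∃ (w : ℝ) (P : Matrix (Fin d) (Fin d) ℂ),
      0 < w ∧ Pᴴ = P ∧ P * P = P ∧ P.rank = l ∧ (V i)ᴴ * V i = (w : ℂ) • P) :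
    qPotential V = ((d : ℂ) / (l : ℂ)) • 1 ∧
    MajMat (((d : ℂ) / (l : ℂ)) • (1 : Matrix (Fin l) (Fin l) ℂ)) (qPotential V) ∧
    (∀ Ψ : UINorm l ℂ, Ψ.N (qPotential V) = (d : ℝ) * (Ψ.N 1 / l)) ∧
    (∀ f : ℝ → ℝ, MonotoneOn f (Set.Ici 0) → ConvexOn ℝ (Set.Ici 0) f → f 0 = 0 →
      ∀ hP : (qPotential V).IsHermitian,
        ∑ i, f (hP.eigenvalues i) = (l : ℝ) * f ((d : ℝ) / l)) := by
  classical
  choose w P hw hPH hP2 hrank hVP using hprojective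
  have hVV : ∀ i, V i * (V i)ᴴ = ((w i : ℂ)) • 1 := fun i =>
    key_VVH (V i) (w i) (hw i) (P i) (hP2 i) (hrank i) (hVP i)
  have hl0 : (l : ℂ) ≠ 0 := Nat.cast_ne_zero.mpr hl.ne'
  have htr : (∑ i, (w i : ℂ)) = (d : ℂ) / (l : ℂ) := by
    have h1 := congrArg Matrix.trace hproto
    rw [Matrix.trace_sum, Matrix.trace_one] at h1
    have h2 : ∀ i, ((V i)ᴴ * V i).trace = (w i : ℂ) * l := by
      intro i
      rw [Matrix.trace_mul_comm, hVV i, Matrix.trace_smul, Matrix.trace_one]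
      simp [Finset.card_univ, smul_eq_mul]
    rw [Finset.sum_congr rfl (fun i _ => h2 i), ← Finset.sum_mul] at h1
    field_simp
    rw [h1]
    simp [Finset.card_univ]
  have hQ : qPotential V = ((d : ℂ) / (l : ℂ)) • (1 : Matrix (Fin l) (Fin l) ℂ) := by
    unfold qPotential
    have step : ∀ j : Fin m, ∑ i : Fin m, (V i * (V j)ᴴ)ᴴ * (V i * (V j)ᴴ)
        = (w j : ℂ) • (1 : Matrix (Fin l) (Fin l) ℂ) := by
      intro j
      have e1 : ∀ i, (V i * (V j)ᴴ)ᴴ * (V i * (V j)ᴴ) = V j * ((V i)ᴴ * V i) * (V j)ᴴ := by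
        intro i
        simp [Matrix.conjTranspose_mul, Matrix.mul_assoc]
      calc ∑ i : Fin m, (V i * (V j)ᴴ)ᴴ * (V i * (V j)ᴴ)
          = ∑ i : Fin m, V j * ((V i)ᴴ * V i) * (V j)ᴴ :=
            Finset.sum_congr rfl (fun i _ => e1 i)
        _ = V j * (∑ i, (V i)ᴴ * V i) * (V j)ᴴ := by
            rw [← Matrix.sum_mul, ← Matrix.mul_sum]
        _ = (w j : ℂ) • 1 := by rw [hproto, Matrix.mul_one, hVV j]
    rw [Finset.sum_comm, Finset.sum_congr rfl (fun j _ => step j), ← Finset.sum_smul, htr]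
  have hcast : (((d : ℝ) / (l : ℝ) : ℝ) : ℂ) = (d : ℂ) / (l : ℂ) := by push_cast; ring
  have hherm : (((d : ℂ) / (l : ℂ)) • (1 : Matrix (Fin l) (Fin l) ℂ)).IsHermitian := by
    rw [← hcast]
    show _ᴴ = _
    rw [Matrix.conjTranspose_smul, Matrix.conjTranspose_one]
    simp [Complex.conj_ofReal]
  have hB : (qPotential V).IsHermitian := hQ ▸ hherm
  have heigB : ∀ i, hB.eigenvalues i = (d : ℝ) / (l : ℝ) := fun i =>
    eig_of_eq_smul_one (by rw [hQ, hcast]) hB i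
  have heigA : ∀ i, hherm.eigenvalues i = (d : ℝ) / (l : ℝ) := fun i =>
    eig_of_eq_smul_one (by rw [hcast]) hherm i
  refine ⟨hQ, ?_, ?_, ?_⟩
  · refine ⟨⟨hherm, hB, ?_⟩, by rw [hQ]⟩
    have : hherm.eigenvalues = hB.eigenvalues := by
      funext i; rw [heigA i, heigB i]
    rw [this]
    exact fun k _ => le_rfl
  · intro Ψ
    rw [hQ, Ψ.smul_eq]
    have hnorm : ‖(d : ℂ) / (l : ℂ)‖ = (d : ℝ) / (l : ℝ) := by
      rw [norm_div]
      simp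
    rw [hnorm]
    ring
  · intro f hmono hconv hf0 hP
    have heig : ∀ i, hP.eigenvalues i = (d : ℝ) / (l : ℝ) := fun i =>
      eig_of_eq_smul_one (by rw [hQ, hcast]) hP i
    rw [Finset.sum_congr rfl (fun i _ => by rw [heig i])]
    simp [Finset.card_univ, mul_comm]
end

section
/- Let ‖·‖ be a compatible unitarily invariant norm with associated symmetric gauge function ψ, and let {V_i}_{i=1}^m be an (m,l,d)-protocol. Then max_{1≤j≤m} ‖V_j V_j*‖ ≥ d·η_ψ(l)/m. Moreover, if ‖·‖ is strict, then equality holds if and only if {V_i}_{i=1}^m is a uniformly weighted projective rank-l (m,l,d)-protocol. -/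
open Matrix BigOperators
open scoped ComplexOrder

noncomputable section Helpers
variable {𝕜 : Type*} [RCLike 𝕜]

namespace Stmt6Aux

lemma N_zero {n : ℕ} (Φ : CUIN 𝕜) : Φ.N n 0 = 0 := by
  have := Φ.smul_eq n 0 0
  simpa using this

lemma N_sum_le {n : ℕ} (Φ : CUIN 𝕜) {ι : Type*} (s : Finset ι)
    (f : ι → Matrix (Fin n) (Fin n) 𝕜) :
    Φ.N n (∑ i ∈ s, f i) ≤ ∑ i ∈ s, Φ.N n (f i) := by
  classical
  induction s using Finset.cons_induction with
  | empty => simp [N_zero]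
  | cons a s ha ih =>
      rw [Finset.sum_cons, Finset.sum_cons]
      exact (Φ.triangle n _ _).trans (by linarith)

lemma N_perm {n : ℕ} (Φ : CUIN 𝕜) (x : Fin n → ℝ) (e : Fin n ≃ Fin n) :
    Φ.N n (Matrix.diagonal (fun i => (x (e i) : 𝕜)))
      = Φ.N n (Matrix.diagonal fun i => (x i : 𝕜)) := by
  classical
  set P := (1 : Matrix (Fin n) (Fin n) 𝕜).submatrix e id with hP
  have hPU : P ∈ Matrix.unitaryGroup (Fin n) 𝕜 := by
    rw [Matrix.mem_unitaryGroup_iff]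
    ext i j
    simp [P, Matrix.mul_apply, Matrix.one_apply, e.injective.eq_iff, Matrix.submatrix_apply,
      Matrix.star_apply, eq_comm]
  have hPH : star P ∈ Matrix.unitaryGroup (Fin n) 𝕜 := Unitary.star_mem hPU
  have hconj : P * Matrix.diagonal (fun i => (x i : 𝕜)) * Pᴴ
      = Matrix.diagonal (fun i => (x (e i) : 𝕜)) := by
    ext i j
    simp only [P, Matrix.mul_apply, Matrix.one_apply, Matrix.diagonal_apply,
      Matrix.submatrix_apply, Matrix.conjTranspose_apply, Matrix.star_apply, id_eq]
    by_cases h : i = j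
    · subst h
      simp [Finset.sum_ite_eq, Finset.sum_ite_eq', e.injective.eq_iff, apply_ite]
    · simp [Finset.sum_ite_eq, Finset.sum_ite_eq', e.injective.eq_iff, apply_ite, h,
        mul_ite, ite_mul]
  calc Φ.N n (Matrix.diagonal (fun i => (x (e i) : 𝕜)))
      = Φ.N n (P * Matrix.diagonal (fun i => (x i : 𝕜)) * Pᴴ) := by rw [hconj]
    _ = Φ.N n (Matrix.diagonal fun i => (x i : 𝕜)) := by
        have := Φ.invariant n (Matrix.diagonal fun i => (x i : 𝕜)) ⟨P, hPU⟩ ⟨star P, hPH⟩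
        simpa [Matrix.star_eq_conjTranspose] using this

lemma isUnit_of_rank_eq_card {n : ℕ} (A : Matrix (Fin n) (Fin n) 𝕜) (h : A.rank = n) :
    IsUnit A := by
  rw [← Matrix.mulVec_surjective_iff_isUnit]
  have hr : LinearMap.range A.mulVecLin = ⊤ := by
    apply Submodule.eq_top_of_finrank_eq
    rw [← Matrix.rank, h]
    simp [Module.finrank_fintype_fun_eq_card]
  have hs := LinearMap.range_eq_top.mp hr
  intro y
  obtain ⟨v, hv⟩ := hs y
  exact ⟨v, by simpa [Matrix.mulVecLin_apply] using hv⟩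

lemma trace_eq_sum_eigen {n : ℕ} {A : Matrix (Fin n) (Fin n) 𝕜} (hA : A.IsHermitian) :
    A.trace = ((∑ i, hA.eigenvalues i : ℝ) : 𝕜) := by
  classical
  conv_lhs => rw [hA.spectral_theorem, Unitary.conjStarAlgAut_apply]
  rw [Matrix.trace_mul_cycle]
  have h1 : (star (Matrix.IsHermitian.eigenvectorUnitary hA : Matrix (Fin n) (Fin n) 𝕜))
      * (Matrix.IsHermitian.eigenvectorUnitary hA : Matrix (Fin n) (Fin n) 𝕜) = 1 :=
    Unitary.coe_star_mul_self _
  rw [h1, Matrix.one_mul, Matrix.trace_diagonal]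
  push_cast
  rfl

lemma N_eta_pos {l : ℕ} (hl : 0 < l) (Φ : CUIN 𝕜) : 0 < Φ.eta l := by
  have h0 : Φ.N l 1 ≠ 0 := by
    intro h
    have h1 := Φ.eq_zero l 1 h
    have := congrFun (congrFun h1 ⟨0, hl⟩) ⟨0, hl⟩
    simp [Matrix.one_apply] at this
  have := Φ.nonneg l 1
  have hpos : 0 < Φ.N l 1 := lt_of_le_of_ne this (Ne.symm h0)
  exact div_pos hpos (by exact_mod_cast hl)

/-- Key: for PSD `A`, `re(tr A) * η ≤ ‖A‖`. -/
lemma trace_mul_eta_le_N {l : ℕ} (hl : 0 < l) (Φ : CUIN 𝕜) (A : Matrix (Fin l) (Fin l) 𝕜)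
    (hA : A.PosSemidef) : RCLike.re A.trace * Φ.eta l ≤ Φ.N l A := by
  classical
  haveI : NeZero l := ⟨hl.ne'⟩
  have hH := hA.1
  set lam := hH.eigenvalues with hlam
  set T : ℝ := ∑ i, lam i with hT
  have hTnn : 0 ≤ T := Finset.sum_nonneg fun i _ => hA.eigenvalues_nonneg i
  have htr : RCLike.re A.trace = T := by rw [trace_eq_sum_eigen hH]; simp [hT, hlam]
  have hNdiag : Φ.N l A = Φ.N l (Matrix.diagonal fun i => (lam i : 𝕜)) := by
    conv_lhs => rw [hH.spectral_theorem]
    have := Φ.invariant l (Matrix.diagonal fun i => (lam i : 𝕜)) hH.eigenvectorUnitary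
      ⟨star (hH.eigenvectorUnitary : Matrix (Fin l) (Fin l) 𝕜),
        Unitary.star_mem hH.eigenvectorUnitary.2⟩
    simpa [Function.comp_def] using this
  have hsum : ∑ k : Fin l, Matrix.diagonal (fun i => (lam ((Equiv.addLeft k) i) : 𝕜))
      = ((T : ℝ) : 𝕜) • (1 : Matrix (Fin l) (Fin l) 𝕜) := by
    ext i j
    by_cases h : i = j
    · subst h
      simp only [Matrix.sum_apply, Matrix.diagonal_apply_eq, Matrix.smul_apply,
        Matrix.one_apply_eq, smul_eq_mul, mul_one, Equiv.coe_addLeft]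
      rw [← RCLike.ofReal_sum]
      norm_cast
      exact Equiv.sum_comp (Equiv.addRight i) lam
    · simp [Matrix.diagonal_apply_ne _ h, Matrix.one_apply_ne h, Matrix.sum_apply,
        (Equiv.addLeft · |>.injective.ne h)]
  have havg : Φ.N l (((T : ℝ) : 𝕜) • 1) ≤ (l : ℝ) * Φ.N l A := by
    rw [← hsum]
    calc Φ.N l (∑ k : Fin l, Matrix.diagonal (fun i => (lam ((Equiv.addLeft k) i) : 𝕜)))
        ≤ ∑ k : Fin l, Φ.N l (Matrix.diagonal fun i => (lam ((Equiv.addLeft k) i) : 𝕜)) :=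
          N_sum_le Φ _ _
      _ = ∑ _k : Fin l, Φ.N l A := by
          refine Finset.sum_congr rfl fun k _ => ?_
          rw [N_perm Φ lam (Equiv.addLeft k), hNdiag]
      _ = (l : ℝ) * Φ.N l A := by simp [mul_comm]
  have hval : Φ.N l (((T : ℝ) : 𝕜) • 1) = T * ((l : ℝ) * Φ.eta l) := by
    rw [Φ.smul_eq l]
    have : ‖((T : ℝ) : 𝕜)‖ = T := by
      rw [RCLike.norm_ofReal, abs_of_nonneg hTnn]
    rw [this]
    have hl' : (l : ℝ) ≠ 0 := by exact_mod_cast hl.ne'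
    rw [CUIN.eta]
    field_simp
  rw [htr]
  have hl' : (0 : ℝ) < l := by exact_mod_cast hl
  have := hval ▸ havg
  nlinarith [this]


lemma rank_smul_eq {a b : ℕ} (k : 𝕜) (hk : k ≠ 0) (M : Matrix (Fin a) (Fin b) 𝕜) :
    (k • M).rank = M.rank := by
  classical
  have key : ∀ (c : 𝕜) (N : Matrix (Fin a) (Fin b) 𝕜), (c • N).rank ≤ N.rank := by
    intro c N
    have h1 : c • N = (c • (1 : Matrix (Fin a) (Fin a) 𝕜)) * N := by
      rw [Matrix.smul_mul, Matrix.one_mul]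
    rw [h1]
    exact Matrix.rank_mul_le_right _ _
  refine le_antisymm (key k M) ?_
  have h2 : M = k⁻¹ • (k • M) := by rw [smul_smul, inv_mul_cancel₀ hk, one_smul]
  conv_lhs => rw [h2]
  exact key _ _

end Stmt6Aux
end Helpers

theorem stmt6 {𝕜 : Type*} [RCLike 𝕜] (m l d : ℕ) (hm : 0 < m) (hl : 0 < l) (hld : l < d)
    (Φ : CUIN 𝕜) (V : Fin m → Matrix (Fin l) (Fin d) 𝕜)
    (hproto : ∑ i, (V i)ᴴ * V i = 1) :
    (d : ℝ) * Φ.eta l / m ≤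
      Finset.sup' (Finset.univ : Finset (Fin m)) ⟨⟨0, hm⟩, Finset.mem_univ _⟩
        (fun j => Φ.N l (V j * (V j)ᴴ)) ∧
    (Φ.Strict →
      (Finset.sup' (Finset.univ : Finset (Fin m)) ⟨⟨0, hm⟩, Finset.mem_univ _⟩
          (fun j => Φ.N l (V j * (V j)ᴴ)) = (d : ℝ) * Φ.eta l / m ↔ IsUWPProj V)) := by
  classical
  have hd : 0 < d := hl.trans hld
  set η := Φ.eta l with hηdef
  have hη0 : 0 < η := Stmt6Aux.N_eta_pos hl Φ
  have hm' : (0 : ℝ) < m := by exact_mod_cast hm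
  have hl' : (0 : ℝ) < l := by exact_mod_cast hl
  have hd' : (0 : ℝ) < d := by exact_mod_cast hd
  set f : Fin m → ℝ := fun j => Φ.N l (V j * (V j)ᴴ) with hfdef
  set S : ℝ := Finset.sup' (Finset.univ : Finset (Fin m)) ⟨⟨0, hm⟩, Finset.mem_univ _⟩ f with hSdef
  set T : Fin m → ℝ := fun j => RCLike.re (V j * (V j)ᴴ).trace with hTdef
  -- the trace identity
  have htr : ∑ j, (V j * (V j)ᴴ).trace = (d : 𝕜) := by
    calc ∑ j, (V j * (V j)ᴴ).trace = ∑ j, ((V j)ᴴ * V j).trace :=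
          Finset.sum_congr rfl fun j _ => Matrix.trace_mul_comm _ _
      _ = (∑ j, (V j)ᴴ * V j).trace := by rw [Matrix.trace_sum]
      _ = (1 : Matrix (Fin d) (Fin d) 𝕜).trace := by rw [hproto]
      _ = (d : 𝕜) := by simp [Matrix.trace_one]
  have hTsum : ∑ j, T j = (d : ℝ) := by
    have := congrArg RCLike.re htr
    simpa [hTdef, map_sum] using this
  have hpsd : ∀ j, (V j * (V j)ᴴ).PosSemidef := fun j =>
    Matrix.posSemidef_self_mul_conjTranspose _
  have hkey : ∀ j, T j * η ≤ f j := fun j =>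
    Stmt6Aux.trace_mul_eta_le_N hl Φ _ (hpsd j)
  have hfS : ∀ j, f j ≤ S := fun j => Finset.le_sup' f (Finset.mem_univ j)
  have hsum_le : ∑ j, f j ≤ (m : ℝ) * S := by
    calc ∑ j, f j ≤ ∑ _j : Fin m, S := Finset.sum_le_sum fun j _ => hfS j
      _ = (m : ℝ) * S := by simp [mul_comm, Finset.sum_const, Finset.card_univ]
  have hsum_ge : (d : ℝ) * η ≤ ∑ j, f j := by
    calc (d : ℝ) * η = ∑ j, T j * η := by rw [← Finset.sum_mul, hTsum]
      _ ≤ ∑ j, f j := Finset.sum_le_sum fun j _ => hkey j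
  have hmain : (d : ℝ) * η / m ≤ S := by
    rw [div_le_iff₀ hm']
    nlinarith [hsum_le, hsum_ge]
  refine ⟨hmain, fun hstrict => ⟨fun heq => ?_, fun huwp => ?_⟩⟩
  · -- equality → IsUWPProj
    have hms : (m : ℝ) * S = (d : ℝ) * η := by
      rw [heq]; field_simp
    have hsum_eq : ∑ j, f j = (d : ℝ) * η := le_antisymm (hms ▸ hsum_le) hsum_ge
    have hfeq : ∀ j, f j = T j * η := by
      intro j
      have h0 : ∑ j, (f j - T j * η) = 0 := by
        rw [Finset.sum_sub_distrib, ← Finset.sum_mul, hTsum]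
        linarith [hsum_eq]
      have := (Finset.sum_eq_zero_iff_of_nonneg
        (fun j _ => sub_nonneg.mpr (hkey j))).mp h0 j (Finset.mem_univ j)
      linarith
    have hfS' : ∀ j, f j = S := by
      intro j
      have h0 : ∑ j, (S - f j) = 0 := by
        rw [Finset.sum_sub_distrib, Finset.sum_const, Finset.card_univ]
        simp only [Fintype.card_fin, nsmul_eq_mul]
        linarith [hms, hsum_eq]
      have := (Finset.sum_eq_zero_iff_of_nonneg
        (fun j _ => sub_nonneg.mpr (hfS j))).mp h0 j (Finset.mem_univ j)
      linarith
    have hTval : ∀ j, T j = (d : ℝ) / m := by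
      intro j
      have h1 : T j * η = (d : ℝ) * η / m := by rw [← hfeq j, hfS' j, heq]
      have h2 : T j * η = ((d : ℝ) / m) * η := by rw [h1]; ring
      exact mul_right_cancel₀ hη0.ne' h2
    refine ⟨hproto, fun i => ?_⟩
    -- strictness gives V i * (V i)ᴴ = c • 1
    have hAeq := hstrict l (V i * (V i)ᴴ) (hpsd i) (by rw [← hfeq i])
    have htrace_i : (V i * (V i)ᴴ).trace = (((d : ℝ) / m : ℝ) : 𝕜) := by
      rw [Stmt6Aux.trace_eq_sum_eigen (hpsd i).1]
      congr 1
      have : RCLike.re ((V i * (V i)ᴴ).trace) = (d : ℝ) / m := hTval i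
      rw [Stmt6Aux.trace_eq_sum_eigen (hpsd i).1] at this
      simpa using this
    set c : 𝕜 := (d : 𝕜) / ((m : 𝕜) * (l : 𝕜)) with hcdef
    have hc0 : c ≠ 0 := by
      rw [hcdef]
      apply div_ne_zero
      · exact_mod_cast hd.ne'
      · exact mul_ne_zero (by exact_mod_cast hm.ne') (by exact_mod_cast hl.ne')
    have hA1 : V i * (V i)ᴴ = c • 1 := by
      rw [hAeq, htrace_i, hcdef]
      congr 1
      push_cast
      field_simp
    -- build the projection
    refine ⟨c⁻¹ • ((V i)ᴴ * V i), ?_, ?_, ?_, ?_⟩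
    · -- hermitian
      rw [Matrix.conjTranspose_smul, Matrix.conjTranspose_mul,
        Matrix.conjTranspose_conjTranspose]
      congr 1
      rw [hcdef]
      simp [star_div₀, RCLike.star_def]
    · -- idempotent
      have hsq : ((V i)ᴴ * V i) * ((V i)ᴴ * V i) = c • ((V i)ᴴ * V i) := by
        calc ((V i)ᴴ * V i) * ((V i)ᴴ * V i)
            = (V i)ᴴ * ((V i * (V i)ᴴ) * V i) := by
              simp only [Matrix.mul_assoc]
          _ = (V i)ᴴ * ((c • (1 : Matrix (Fin l) (Fin l) 𝕜)) * V i) := by rw [hA1]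
          _ = c • ((V i)ᴴ * V i) := by
              rw [Matrix.smul_mul, Matrix.one_mul, Matrix.mul_smul]
      rw [Matrix.smul_mul, Matrix.mul_smul, hsq, smul_smul, smul_smul]
      congr 1
      field_simp
    · -- rank
      have h1 : (c⁻¹ • ((V i)ᴴ * V i)).rank = ((V i)ᴴ * V i).rank :=
        Stmt6Aux.rank_smul_eq c⁻¹ (inv_ne_zero hc0) _
      have h2 : ((V i)ᴴ * V i).rank = (V i).rank := Matrix.rank_conjTranspose_mul_self _
      have h3 : (V i).rank = (V i * (V i)ᴴ).rank := (Matrix.rank_self_mul_conjTranspose _).symm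
      have h4 : (V i * (V i)ᴴ).rank = l := by
        rw [hA1, Stmt6Aux.rank_smul_eq c hc0, Matrix.rank_one, Fintype.card_fin]
      rw [h1, h2, h3, h4]
    · rw [smul_smul]
      rw [mul_inv_cancel₀ hc0, one_smul]
  · -- IsUWPProj → equality
    obtain ⟨-, hP⟩ := huwp
    set c : 𝕜 := (d : 𝕜) / ((m : 𝕜) * (l : 𝕜)) with hcdef
    have hc0 : c ≠ 0 := by
      rw [hcdef]
      apply div_ne_zero
      · exact_mod_cast hd.ne'
      · exact mul_ne_zero (by exact_mod_cast hm.ne') (by exact_mod_cast hl.ne')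
    have hfall : ∀ i, f i = (d : ℝ) * η / m := by
      intro i
      obtain ⟨P, hPH, hPP, hPrank, hWW⟩ := hP i
      set A : Matrix (Fin l) (Fin l) 𝕜 := V i * (V i)ᴴ with hAdef
      have hWW' : ∀ (B : Matrix (Fin d) (Fin l) 𝕜), (V i)ᴴ * (V i * B) = c • (P * B) := by
        intro B
        rw [← Matrix.mul_assoc, hWW, Matrix.smul_mul]
      have hA3 : A * (A * A) = c • (A * A) := by
        simp only [hAdef, Matrix.mul_assoc, hWW', Matrix.mul_smul, smul_smul]
        rw [← Matrix.mul_assoc P P, hPP]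
      have hrank : A.rank = l := by
        have h2' : A.rank = (V i).rank := Matrix.rank_self_mul_conjTranspose _
        have h3' : (V i).rank = ((V i)ᴴ * V i).rank :=
          (Matrix.rank_conjTranspose_mul_self _).symm
        have h4' : ((V i)ᴴ * V i).rank = P.rank := by
          rw [hWW, Stmt6Aux.rank_smul_eq c hc0]
        rw [h2', h3', h4', hPrank]
      have hU : IsUnit A := Stmt6Aux.isUnit_of_rank_eq_card A hrank
      obtain ⟨iA⟩ := hU.nonempty_invertible
      have hA1 : A = c • 1 := by
        have hcongr := congrArg (fun X => ⅟A * (⅟A * X)) hA3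
        simp only [Matrix.mul_smul, invOf_mul_cancel_left, invOf_mul_self] at hcongr
        exact hcongr
      have hcval : c = (((d : ℝ) / ((m : ℝ) * (l : ℝ)) : ℝ) : 𝕜) := by
        rw [hcdef]; push_cast; ring
      have hfi : f i = Φ.N l (c • (1 : Matrix (Fin l) (Fin l) 𝕜)) := by
        have h5 : f i = Φ.N l A := rfl
        rw [h5, hA1]
      rw [hfi, Φ.smul_eq, hcval, RCLike.norm_ofReal,
        abs_of_nonneg (by positivity)]
      have hN1 : Φ.N l 1 = η * l := by
        rw [hηdef, CUIN.eta]; field_simp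
      rw [hN1]
      field_simp
    have hconst : f = fun _ : Fin m => (d : ℝ) * η / m := funext fun j => hfall j
    rw [hSdef, hconst]; exact Finset.sup'_const _ _
end

section
/- Let ‖·‖ be a compatible unitarily invariant norm with associated symmetric gauge function ψ, and let {V_i}_{i=1}^m be an (m,l,d)-protocol with analysis operator V. Then the worst-case reconstruction error for one lost packet satisfies e_1^ψ(V) ≥ d·η_ψ(l)/m. Moreover, if ‖·‖ is strict, then equality holds if and only if {V_i}_{i=1}^m is a uniformly weighted projective rank-l (m,l,d)-protocol. -/
open Matrix BigOperators
open scoped ComplexOrder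

noncomputable section
variable {𝕜 : Type*} [RCLike 𝕜]
open Matrix

namespace MyAux

lemma padMat_mul {r t : ℕ} (X Y : Matrix (Fin r) (Fin r) 𝕜) :
    padMat t X * padMat t Y = padMat t (X * Y) := by
  simp only [padMat, reindex_apply, submatrix_mul_equiv, Matrix.fromBlocks_multiply]
  simp

lemma padMat_conjTranspose {r t : ℕ} (X : Matrix (Fin r) (Fin r) 𝕜) :
    (padMat t X)ᴴ = padMat t Xᴴ := by
  simp only [padMat, reindex_apply, conjTranspose_submatrix, fromBlocks_conjTranspose]
  simp

lemma padMat_smul {r t : ℕ} (c : 𝕜) (X : Matrix (Fin r) (Fin r) 𝕜) :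
    padMat t (c • X) = c • padMat t X := by
  have hb : Matrix.fromBlocks (c • X) (0:Matrix (Fin r) (Fin t) 𝕜)
      (0:Matrix (Fin t) (Fin r) 𝕜) (0:Matrix (Fin t) (Fin t) 𝕜)
      = c • Matrix.fromBlocks X 0 0 0 := by
    rw [Matrix.fromBlocks_smul]; simp
  simp [padMat, hb, reindex_apply, submatrix_smul]

lemma padMat_injective {r t : ℕ} : Function.Injective (padMat (𝕜 := 𝕜) (r := r) t) := by
  intro X Y h
  have h2 := congrArg (fun M => (Matrix.reindex finSumFinEquiv finSumFinEquiv).symm M) h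
  simp only [padMat, Equiv.symm_apply_apply] at h2
  have := congrArg Matrix.toBlocks₁₁ h2
  simpa [Matrix.toBlocks_fromBlocks₁₁] using this

lemma padMat_diagonal {r t : ℕ} (v : Fin r → 𝕜) :
    padMat t (diagonal v) =
      diagonal (fun j : Fin (r + t) => Sum.elim v (fun _ => (0:𝕜)) (finSumFinEquiv.symm j)) := by
  rw [padMat, ← Matrix.diagonal_zero (n := Fin t), Matrix.fromBlocks_diagonal, reindex_apply,
    submatrix_diagonal_equiv]
  rfl

lemma diagonal_eq_padMat {r t : ℕ} (g : Fin (r + t) → 𝕜)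
    (hg : ∀ j : Fin (r + t), r ≤ (j : ℕ) → g j = 0) :
    diagonal g = padMat t (diagonal (fun i : Fin r => g (Fin.castAdd t i))) := by
  rw [padMat_diagonal]
  have hfun : g = fun j : Fin (r + t) =>
      Sum.elim (fun i : Fin r => g (Fin.castAdd t i)) (fun _ => (0:𝕜)) (finSumFinEquiv.symm j) := by
    funext j
    rcases h : finSumFinEquiv.symm j with a | a
    · have hj : j = Fin.castAdd t a := by
        have := congrArg finSumFinEquiv h
        simpa [finSumFinEquiv_apply_left] using this
      subst hj; rfl
    · have hj : j = Fin.natAdd r a := by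
        have := congrArg finSumFinEquiv h
        simpa [finSumFinEquiv_apply_right] using this
      subst hj
      simpa using hg _ (by simp [Fin.natAdd])
  conv_lhs => rw [hfun]


lemma perm_conj {n : ℕ} (e : Equiv.Perm (Fin n)) (X : Matrix (Fin n) (Fin n) 𝕜) :
    ∃ U : Matrix.unitaryGroup (Fin n) 𝕜,
      X.submatrix e e = (U : Matrix (Fin n) (Fin n) 𝕜) * X * star (U : Matrix (Fin n) (Fin n) 𝕜) := by
  set P : Matrix (Fin n) (Fin n) 𝕜 := (1 : Matrix (Fin n) (Fin n) 𝕜).submatrix e id with hP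
  have hstar : star P = (1 : Matrix (Fin n) (Fin n) 𝕜).submatrix id e := by
    show Pᴴ = _
    rw [hP, conjTranspose_submatrix, conjTranspose_one]
  have hsub1 : (1 : Matrix (Fin n) (Fin n) 𝕜).submatrix e e = 1 := by
    rw [show (1 : Matrix (Fin n) (Fin n) 𝕜) = diagonal (fun _ => (1:𝕜)) from (diagonal_one).symm,
      submatrix_diagonal_equiv]
    simp [Function.comp_def]
  have hmem : P ∈ Matrix.unitaryGroup (Fin n) 𝕜 := by
    rw [Matrix.mem_unitaryGroup_iff, hstar, hP]
    have := Matrix.submatrix_mul_equiv (1 : Matrix (Fin n) (Fin n) 𝕜)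
      (1 : Matrix (Fin n) (Fin n) 𝕜) e (Equiv.refl (Fin n)) e
    simpa [hsub1] using this
  refine ⟨⟨P, hmem⟩, ?_⟩
  show X.submatrix e e = P * X * star P
  rw [hstar, hP]
  have h1 : (1 : Matrix (Fin n) (Fin n) 𝕜).submatrix ⇑e id * X
      = X.submatrix e id := by
    have := Matrix.submatrix_mul_equiv (1 : Matrix (Fin n) (Fin n) 𝕜) X e (Equiv.refl (Fin n)) id
    simpa using this
  have h2 : X.submatrix ⇑e id * (1 : Matrix (Fin n) (Fin n) 𝕜).submatrix id ⇑e
      = X.submatrix e e := by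
    have := Matrix.submatrix_mul_equiv X (1 : Matrix (Fin n) (Fin n) 𝕜) e (Equiv.refl (Fin n)) e
    simpa using this
  rw [h1, h2]

lemma N_zero {n : ℕ} (Φ : CUIN 𝕜) : Φ.N n 0 = 0 := by
  have := Φ.smul_eq n 0 0
  simpa using this

lemma N_conj {n : ℕ} (Φ : CUIN 𝕜) (A : Matrix (Fin n) (Fin n) 𝕜)
    (U : Matrix.unitaryGroup (Fin n) 𝕜) :
    Φ.N n ((U : Matrix (Fin n) (Fin n) 𝕜) * A * star (U : Matrix (Fin n) (Fin n) 𝕜)) = Φ.N n A :=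
  Φ.invariant n A U ⟨star (U : Matrix (Fin n) (Fin n) 𝕜), Unitary.star_mem U.2⟩

lemma N_diag_perm {n : ℕ} (Φ : CUIN 𝕜) (v : Fin n → 𝕜) (e : Equiv.Perm (Fin n)) :
    Φ.N n (diagonal (v ∘ e)) = Φ.N n (diagonal v) := by
  obtain ⟨U, hU⟩ := perm_conj e (diagonal v)
  rw [← Matrix.submatrix_diagonal_equiv, hU, N_conj]

lemma N_sum_le {n : ℕ} (Φ : CUIN 𝕜) {ι : Type*} (s : Finset ι)
    (f : ι → Matrix (Fin n) (Fin n) 𝕜) :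
    Φ.N n (∑ i ∈ s, f i) ≤ ∑ i ∈ s, Φ.N n (f i) := by
  classical
  induction s using Finset.induction_on with
  | empty => simp [N_zero]
  | insert _ _ hx ih =>
    rw [Finset.sum_insert hx, Finset.sum_insert hx]
    exact le_trans (Φ.triangle n _ _) (by linarith)

lemma N_diag_lb {l : ℕ} (Φ : CUIN 𝕜) (hl : 0 < l) (v : Fin l → ℝ) (hv : ∀ j, 0 ≤ v j) :
    (∑ j, v j) * Φ.N l 1 ≤ (l : ℝ) * Φ.N l (diagonal (fun j => ((v j : ℝ) : 𝕜))) := by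
  obtain ⟨l', rfl⟩ := Nat.exists_eq_succ_of_ne_zero hl.ne'
  set w : Fin (l' + 1) → 𝕜 := fun j => ((v j : ℝ) : 𝕜) with hw
  have hdsum : ∑ k : Fin (l'+1), diagonal (w ∘ (Equiv.addRight k))
      = diagonal (fun i => ∑ k : Fin (l'+1), w (i + k)) := by
    ext i j
    by_cases hij : i = j
    · subst hij
      simp [Matrix.sum_apply, Matrix.diagonal_apply_eq, Equiv.coe_addRight]
    · simp [Matrix.sum_apply, Matrix.diagonal_apply_ne _ hij]
  have hshift : ∀ i : Fin (l'+1), ∑ k : Fin (l'+1), w (i + k) = ∑ k : Fin (l'+1), w k := by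
    intro i
    exact Fintype.sum_equiv (Equiv.addLeft i) _ w (fun k => by simp [Equiv.coe_addLeft])
  have hkey : ((∑ j, v j : ℝ) : 𝕜) • (1 : Matrix (Fin (l'+1)) (Fin (l'+1)) 𝕜)
      = ∑ k : Fin (l'+1), diagonal (w ∘ (Equiv.addRight k)) := by
    rw [hdsum]
    have : (fun i : Fin (l'+1) => ∑ k : Fin (l'+1), w (i + k))
        = fun _ => ((∑ j, v j : ℝ) : 𝕜) := by
      funext i
      rw [hshift i, hw]
      push_cast
      rfl
    rw [this, ← Matrix.smul_one_eq_diagonal]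
  have h1 : Φ.N (l'+1) (((∑ j, v j : ℝ) : 𝕜) • 1) = (∑ j, v j) * Φ.N (l'+1) 1 := by
    rw [Φ.smul_eq]
    congr 1
    rw [RCLike.norm_ofReal, abs_of_nonneg (Finset.sum_nonneg fun j _ => hv j)]
  have h2 : Φ.N (l'+1) (∑ k : Fin (l'+1), diagonal (w ∘ (Equiv.addRight k)))
      ≤ ∑ k : Fin (l'+1), Φ.N (l'+1) (diagonal (w ∘ (Equiv.addRight k))) :=
    N_sum_le Φ _ _
  have h3 : ∀ k : Fin (l'+1), Φ.N (l'+1) (diagonal (w ∘ (Equiv.addRight k)))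
      = Φ.N (l'+1) (diagonal w) := fun k => N_diag_perm Φ w _
  calc (∑ j, v j) * Φ.N (l'+1) 1 = Φ.N (l'+1) (((∑ j, v j : ℝ) : 𝕜) • 1) := h1.symm
    _ ≤ ∑ k : Fin (l'+1), Φ.N (l'+1) (diagonal (w ∘ (Equiv.addRight k))) := by rw [hkey]; exact h2
    _ = (l'+1 : ℝ) * Φ.N (l'+1) (diagonal w) := by
        rw [Finset.sum_congr rfl (fun k _ => h3 k)]
        simp [Finset.sum_const, mul_comm]
    _ = ((l'+1 : ℕ) : ℝ) * Φ.N (l'+1) (diagonal w) := by push_cast; ring_nf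



lemma trace_hermitian {n : ℕ} (A : Matrix (Fin n) (Fin n) 𝕜) (hA : A.IsHermitian) :
    A.trace = ∑ i, (hA.eigenvalues i : 𝕜) := by
  conv_lhs => rw [hA.spectral_theorem, Unitary.conjStarAlgAut_apply]
  rw [Matrix.trace_mul_cycle, (Matrix.mem_unitaryGroup_iff'.mp (hA.eigenvectorUnitary).2), one_mul]
  simp [Matrix.trace_diagonal]

lemma exists_unitary_pad {l t : ℕ} (A : Matrix (Fin (l + t)) (Fin (l + t)) 𝕜)
    (hA : A.PosSemidef) (hrank : A.rank ≤ l) :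
    ∃ (U : Matrix.unitaryGroup (Fin (l + t)) 𝕜) (μ : Fin l → ℝ),
      A = (U : Matrix (Fin (l+t)) (Fin (l+t)) 𝕜) * padMat t (diagonal (fun j => ((μ j : ℝ) : 𝕜)))
          * star (U : Matrix (Fin (l+t)) (Fin (l+t)) 𝕜) ∧
      (∀ j, 0 ≤ μ j) ∧ (∑ j, μ j) = RCLike.re A.trace ∧
      (Finset.univ.filter (fun j => μ j ≠ 0)).card = A.rank := by
  classical
  have hH : A.IsHermitian := hA.1
  set lam := hH.eigenvalues with hlam
  set σ : Equiv.Perm (Fin (l + t)) := Tuple.sort (fun i => - lam i) with hσ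
  have hmono := Tuple.monotone_sort (fun i => - lam i)
  set g : Fin (l + t) → ℝ := fun i => lam (σ i) with hg
  have hnn : ∀ i, 0 ≤ g i := fun i => hA.eigenvalues_nonneg _
  have hanti : ∀ i j : Fin (l + t), i ≤ j → g j ≤ g i := by
    intro i j hij
    have h2 := hmono hij
    simp only [Function.comp_apply] at h2
    have : -lam (σ i) ≤ -lam (σ j) := h2
    simpa [hg] using neg_le_neg_iff.mp this
  have hcard : (Finset.univ.filter (fun i => g i ≠ 0)).card = A.rank := by
    rw [hH.rank_eq_card_non_zero_eigs, Fintype.card_subtype]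
    apply Finset.card_bij (fun i _ => σ i)
    · intro a ha; simp only [Finset.mem_filter, Finset.mem_univ, true_and] at ha ⊢; exact ha
    · intro a _ b _ hab; exact σ.injective hab
    · intro b hb
      refine ⟨σ.symm b, ?_, by simp⟩
      simp only [Finset.mem_filter, Finset.mem_univ, true_and] at hb ⊢
      simpa [hg] using hb
  have hzero : ∀ j : Fin (l + t), l ≤ (j : ℕ) → g j = 0 := by
    intro j hj
    by_contra h
    have hpos : 0 < g j := lt_of_le_of_ne (hnn j) (Ne.symm h)
    have hsub : Finset.Iic j ⊆ Finset.univ.filter (fun i => g i ≠ 0) := by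
      intro i hi
      simp only [Finset.mem_Iic] at hi
      simp only [Finset.mem_filter, Finset.mem_univ, true_and]
      exact ne_of_gt (lt_of_lt_of_le hpos (hanti i j hi))
    have hc := Finset.card_le_card hsub
    rw [Fin.card_Iic, hcard] at hc
    omega
  set μ : Fin l → ℝ := fun i => g (Fin.castAdd t i) with hμ
  have hpad : diagonal (fun j => ((g j : ℝ) : 𝕜))
      = padMat t (diagonal (fun i => ((μ i : ℝ) : 𝕜))) := by
    exact diagonal_eq_padMat (fun j => ((g j : ℝ) : 𝕜))
      (fun j hj => by show ((g j : ℝ) : 𝕜) = 0; rw [hzero j hj, RCLike.ofReal_zero])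
  obtain ⟨U₁, hU₁⟩ := perm_conj σ.symm (diagonal (fun j => ((g j : ℝ) : 𝕜)))
  have hsub2 : (diagonal (fun j => ((g j : ℝ) : 𝕜))).submatrix σ.symm σ.symm
      = diagonal (RCLike.ofReal ∘ lam) := by
    have hfe : ((fun j => ((g j : ℝ) : 𝕜)) ∘ ⇑σ.symm) = RCLike.ofReal ∘ lam := by
      funext j
      simp [hg]
    rw [Matrix.submatrix_diagonal_equiv, hfe]
  refine ⟨hH.eigenvectorUnitary * U₁, μ, ?_, fun j => hnn _, ?_, ?_⟩
  · conv_lhs => rw [hH.spectral_theorem, Unitary.conjStarAlgAut_apply]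
    rw [← hsub2, hU₁, ← hpad]
    have hcoe : ((hH.eigenvectorUnitary * U₁ : Matrix.unitaryGroup (Fin (l+t)) 𝕜)
        : Matrix (Fin (l+t)) (Fin (l+t)) 𝕜)
        = (hH.eigenvectorUnitary : Matrix (Fin (l+t)) (Fin (l+t)) 𝕜)
          * (U₁ : Matrix (Fin (l+t)) (Fin (l+t)) 𝕜) := rfl
    rw [hcoe, Matrix.star_mul]
    simp only [mul_assoc]
  · have htr : A.trace = ∑ i, (lam i : 𝕜) := trace_hermitian A hH
    have h1 : ∑ j : Fin (l + t), g j = ∑ i, lam i := Equiv.sum_comp σ lam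
    have h2 : ∑ j : Fin (l + t), g j
        = ∑ i : Fin l, g (Fin.castAdd t i) + ∑ i : Fin t, g (Fin.natAdd l i) :=
      Fin.sum_univ_add g
    have h3 : ∑ i : Fin t, g (Fin.natAdd l i) = 0 :=
      Finset.sum_eq_zero (fun i _ => hzero _ (by simp))
    have h4 : RCLike.re A.trace = ∑ i, lam i := by
      rw [htr, map_sum]
      simp
    rw [h4, ← h1, h2, h3, add_zero]
  · rw [← hcard]
    apply Finset.card_bij (fun (i : Fin l) _ => Fin.castAdd t i)
    · intro a ha; simp only [Finset.mem_filter, Finset.mem_univ, true_and] at ha ⊢; exact ha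
    · intro a _ b _ hab
      exact Fin.ext (by simpa using congrArg Fin.val hab)
    · intro b hb
      simp only [Finset.mem_filter, Finset.mem_univ, true_and] at hb
      have hbl : (b : ℕ) < l := by
        by_contra hcon
        exact hb (hzero b (le_of_not_gt hcon))
      refine ⟨⟨b, hbl⟩, ?_, Fin.ext rfl⟩
      simp only [Finset.mem_filter, Finset.mem_univ, true_and, hμ]
      have : Fin.castAdd t (⟨b, hbl⟩ : Fin l) = b := Fin.ext rfl
      rw [this]
      exact hb



lemma rank_conj_unitary {n : ℕ} (U : Matrix.unitaryGroup (Fin n) 𝕜)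
    (X : Matrix (Fin n) (Fin n) 𝕜) :
    ((U : Matrix (Fin n) (Fin n) 𝕜) * X * star (U : Matrix (Fin n) (Fin n) 𝕜)).rank = X.rank := by
  have hU : IsUnit (U : Matrix (Fin n) (Fin n) 𝕜).det := Matrix.UnitaryGroup.det_isUnit U
  have hUs : IsUnit (star (U : Matrix (Fin n) (Fin n) 𝕜)).det :=
    Matrix.UnitaryGroup.det_isUnit ⟨star (U : Matrix (Fin n) (Fin n) 𝕜), Unitary.star_mem U.2⟩
  rw [Matrix.rank_mul_eq_left_of_isUnit_det _ _ hUs, Matrix.rank_mul_eq_right_of_isUnit_det _ _ hU]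

lemma conj_unitary_inj {n : ℕ} (U : Matrix.unitaryGroup (Fin n) 𝕜)
    {X Y : Matrix (Fin n) (Fin n) 𝕜}
    (h : (U : Matrix (Fin n) (Fin n) 𝕜) * X * star (U : Matrix (Fin n) (Fin n) 𝕜)
       = (U : Matrix (Fin n) (Fin n) 𝕜) * Y * star (U : Matrix (Fin n) (Fin n) 𝕜)) : X = Y := by
  set Uc := (U : Matrix (Fin n) (Fin n) 𝕜)
  have h3 : star Uc * Uc = 1 := Matrix.mem_unitaryGroup_iff'.mp U.2
  have key : ∀ Z : Matrix (Fin n) (Fin n) 𝕜, star Uc * (Uc * Z * star Uc) * Uc = Z := by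
    intro Z
    calc star Uc * (Uc * Z * star Uc) * Uc
        = (star Uc * Uc) * Z * (star Uc * Uc) := by simp only [mul_assoc]
      _ = Z := by rw [h3, one_mul, mul_one]
  calc X = star Uc * (Uc * X * star Uc) * Uc := (key X).symm
    _ = star Uc * (Uc * Y * star Uc) * Uc := by rw [h]
    _ = Y := key Y

lemma padMat_one_cond {r t : ℕ} (j : Fin (r + t)) :
    (Sum.elim (fun _ : Fin r => (1:𝕜)) (fun _ : Fin t => (0:𝕜)) (finSumFinEquiv.symm j) ≠ 0)
      ↔ (j : ℕ) < r := by
  rcases h : finSumFinEquiv.symm j with a | a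
  · have hj : j = Fin.castAdd t a := by
      have := congrArg finSumFinEquiv h
      simpa [finSumFinEquiv_apply_left] using this
    subst hj
    simp [h, a.isLt]
  · have hj : j = Fin.natAdd r a := by
      have := congrArg finSumFinEquiv h
      simpa [finSumFinEquiv_apply_right] using this
    subst hj
    simp [h, Fin.natAdd]

lemma rank_padMat_one {r t : ℕ} :
    (padMat t (1 : Matrix (Fin r) (Fin r) 𝕜)).rank = r := by
  classical
  rw [show (1 : Matrix (Fin r) (Fin r) 𝕜) = diagonal (fun _ => (1:𝕜)) from diagonal_one.symm,
    padMat_diagonal, Matrix.rank_diagonal]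
  have he : {j : Fin (r + t) // Sum.elim (fun _ : Fin r => (1:𝕜)) (fun _ : Fin t => (0:𝕜))
      (finSumFinEquiv.symm j) ≠ 0} ≃ Fin r := by
    refine Equiv.trans (Equiv.subtypeEquivRight (fun j => padMat_one_cond j)) ?_
    exact { toFun := fun x => ⟨(x.1 : ℕ), x.2⟩
            invFun := fun i => ⟨Fin.castAdd t i, i.isLt⟩
            left_inv := fun x => Subtype.ext (Fin.ext rfl)
            right_inv := fun i => Fin.ext rfl }
  rw [Fintype.card_congr he, Fintype.card_fin]

lemma N_herm_proj {l t : ℕ} (Φ : CUIN 𝕜) (hl : 0 < l) (P : Matrix (Fin (l + t)) (Fin (l + t)) 𝕜)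
    (hP1 : Pᴴ = P) (hP2 : P * P = P) (hrk : P.rank = l) :
    Φ.N (l + t) P = (l : ℝ) * Φ.eta l := by
  classical
  have hpsd : P.PosSemidef := by
    have h0 : P = Pᴴ * P := by rw [hP1, hP2]
    rw [h0]
    exact Matrix.posSemidef_conjTranspose_mul_self P
  obtain ⟨U, μ, hPeq, hμnn, hμsum, hμcard⟩ := exists_unitary_pad P hpsd (le_of_eq hrk)
  have hall : ∀ j, μ j ≠ 0 := by
    have huniv : (Finset.univ.filter (fun j => μ j ≠ 0)) = Finset.univ := by
      apply Finset.eq_univ_of_card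
      rw [hμcard, hrk, Fintype.card_fin]
    intro j
    have hj : j ∈ Finset.univ.filter (fun j => μ j ≠ 0) := by rw [huniv]; exact Finset.mem_univ j
    exact (Finset.mem_filter.mp hj).2
  set D : Matrix (Fin l) (Fin l) 𝕜 := diagonal (fun j => ((μ j : ℝ) : 𝕜)) with hD
  set Uc := (U : Matrix (Fin (l+t)) (Fin (l+t)) 𝕜)
  have h3 : star Uc * Uc = 1 := Matrix.mem_unitaryGroup_iff'.mp U.2
  have expand : (Uc * padMat t D * star Uc) * (Uc * padMat t D * star Uc)
      = Uc * (padMat t D * padMat t D) * star Uc := by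
    calc (Uc * padMat t D * star Uc) * (Uc * padMat t D * star Uc)
        = Uc * (padMat t D * ((star Uc * Uc) * (padMat t D * star Uc))) := by
          simp only [mul_assoc]
      _ = Uc * (padMat t D * (padMat t D * star Uc)) := by rw [h3, one_mul]
      _ = Uc * (padMat t D * padMat t D) * star Uc := by simp only [mul_assoc]
  have hPP : Uc * padMat t (D * D) * star Uc = Uc * padMat t D * star Uc := by
    rw [← padMat_mul, ← expand, ← hPeq, hP2, hPeq]
  have hidem : D * D = D := padMat_injective (conj_unitary_inj U hPP)
  have hone : ∀ j, μ j = 1 := by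
    intro j
    have h1 : ((μ j : ℝ) : 𝕜) * ((μ j : ℝ) : 𝕜) = ((μ j : ℝ) : 𝕜) := by
      have := congrArg (fun M => M j j) hidem
      simpa [hD, Matrix.diagonal_mul_diagonal, Matrix.diagonal_apply_eq] using this
    have h2 : μ j * μ j = μ j := by exact_mod_cast h1
    have h4 : μ j * (μ j - 1) = 0 := by nlinarith [h2]
    rcases mul_eq_zero.mp h4 with h | h
    · exact absurd h (hall j)
    · linarith
  have hD1 : D = 1 := by
    rw [hD]
    have hfe : (fun j : Fin l => ((μ j : ℝ) : 𝕜)) = fun _ => (1:𝕜) := by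
      funext j; rw [hone j]; simp
    rw [hfe, diagonal_one]
  have hne : (l : ℝ) ≠ 0 := Nat.cast_ne_zero.mpr hl.ne'
  rw [hPeq, N_conj, hD1, Φ.compatible, CUIN.eta, mul_comm, div_mul_cancel₀ _ hne]



lemma key_lb {l t : ℕ} (Φ : CUIN 𝕜) (hl : 0 < l)
    (A : Matrix (Fin (l + t)) (Fin (l + t)) 𝕜) (hA : A.PosSemidef) (hr : A.rank ≤ l) :
    RCLike.re A.trace * Φ.eta l ≤ Φ.N (l + t) A := by
  obtain ⟨U, μ, heq, hnn, hsum, _⟩ := exists_unitary_pad A hA hr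
  have hNA : Φ.N (l + t) A = Φ.N l (diagonal (fun j => ((μ j : ℝ) : 𝕜))) := by
    rw [heq, N_conj, Φ.compatible]
  have hlb := N_diag_lb Φ hl μ hnn
  have hlpos : (0:ℝ) < l := Nat.cast_pos.mpr hl
  rw [hNA, ← hsum, CUIN.eta, mul_div_assoc', div_le_iff₀ hlpos]
  linarith [hlb]

lemma key_eq {l t : ℕ} (Φ : CUIN 𝕜) (hl : 0 < l) (hS : Φ.Strict)
    (A : Matrix (Fin (l + t)) (Fin (l + t)) 𝕜) (hA : A.PosSemidef) (hr : A.rank ≤ l)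
    (heqN : Φ.N (l + t) A = RCLike.re A.trace * Φ.eta l) :
    ∃ P : Matrix (Fin (l + t)) (Fin (l + t)) 𝕜, Pᴴ = P ∧ P * P = P ∧ P.rank = l ∧
      A = (((RCLike.re A.trace : ℝ) : 𝕜) / (l : 𝕜)) • P := by
  obtain ⟨U, μ, heq, hnn, hsum, _⟩ := exists_unitary_pad A hA hr
  set Uc := (U : Matrix (Fin (l + t)) (Fin (l + t)) 𝕜) with hUc
  have hNA : Φ.N (l + t) A = Φ.N l (diagonal (fun j => ((μ j : ℝ) : 𝕜))) := by
    rw [heq, N_conj, Φ.compatible]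
  have hdpsd : (diagonal (fun j => ((μ j : ℝ) : 𝕜))).PosSemidef := by
    refine Matrix.PosSemidef.diagonal ?_
    intro j
    simpa using hnn j
  have htrd : (diagonal (fun j => ((μ j : ℝ) : 𝕜))).trace = ((∑ j, μ j : ℝ) : 𝕜) := by
    rw [Matrix.trace_diagonal]
    push_cast
    rfl
  have hred : RCLike.re (diagonal (fun j => ((μ j : ℝ) : 𝕜))).trace = ∑ j, μ j := by
    rw [htrd, RCLike.ofReal_re]
  have hstrict := hS l (diagonal (fun j => ((μ j : ℝ) : 𝕜))) hdpsd
    (by rw [hred, hsum, ← heqN, hNA])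
  rw [htrd, hsum] at hstrict
  refine ⟨Uc * padMat t 1 * star Uc, ?_, ?_, ?_, ?_⟩
  · rw [Matrix.conjTranspose_mul, Matrix.conjTranspose_mul, padMat_conjTranspose,
      Matrix.conjTranspose_one, ← Matrix.star_eq_conjTranspose, ← Matrix.star_eq_conjTranspose,
      star_star, Matrix.mul_assoc]
  · have h3 : star Uc * Uc = 1 := Matrix.mem_unitaryGroup_iff'.mp U.2
    calc (Uc * padMat t 1 * star Uc) * (Uc * padMat t 1 * star Uc)
        = Uc * (padMat t 1 * ((star Uc * Uc) * (padMat t 1 * star Uc))) := by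
          simp only [mul_assoc]
      _ = Uc * (padMat t 1 * (padMat t 1 * star Uc)) := by rw [h3, one_mul]
      _ = Uc * (padMat t 1 * padMat t 1) * star Uc := by simp only [mul_assoc]
      _ = Uc * padMat t 1 * star Uc := by rw [padMat_mul, one_mul]
  · rw [rank_conj_unitary U, rank_padMat_one]
  · conv_lhs => rw [heq, hstrict]
    rw [padMat_smul, Matrix.mul_smul, Matrix.smul_mul]


end MyAux



end

theorem stmt7 {𝕜 : Type*} [RCLike 𝕜] (m l d : ℕ) (hm : 0 < m) (hl : 0 < l) (hld : l < d)
    (Φ : CUIN 𝕜) (V : Fin m → Matrix (Fin l) (Fin d) 𝕜)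
    (hproto : ∑ i, (V i)ᴴ * V i = 1) :
    (d : ℝ) * Φ.eta l / m ≤ errP Φ 1 V ∧
    (Φ.Strict → (errP Φ 1 V = (d : ℝ) * Φ.eta l / m ↔ IsUWPProj V)) := by
  classical
  obtain ⟨t, rfl⟩ : ∃ t, d = l + t := ⟨d - l, by omega⟩
  have hmpos : (0:ℝ) < m := Nat.cast_pos.mpr hm
  have hlpos : (0:ℝ) < l := Nat.cast_pos.mpr hl
  set A : Fin m → Matrix (Fin (l+t)) (Fin (l+t)) 𝕜 := fun i => (V i)ᴴ * V i with hA
  have hpsd : ∀ i, (A i).PosSemidef := fun i => Matrix.posSemidef_conjTranspose_mul_self _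
  have hrk : ∀ i, (A i).rank ≤ l := by
    intro i
    rw [hA]
    calc ((V i)ᴴ * V i).rank = (V i).rank := Matrix.rank_conjTranspose_mul_self _
      _ ≤ l := (V i).rank_le_height
  set F : Fin m → ℝ := fun i => Φ.N (l+t) (A i) with hF
  set τ : Fin m → ℝ := fun i => RCLike.re ((A i).trace) with hτ
  have hset : {r : ℝ | ∃ K : Finset (Fin m), K.card = 1 ∧ r = Φ.N (l+t) (∑ i ∈ K, (V i)ᴴ * V i)}
      = Set.range F := by
    ext r
    constructor
    · rintro ⟨K, hK, rfl⟩
      obtain ⟨i, rfl⟩ := Finset.card_eq_one.mp hK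
      exact ⟨i, by rw [hF]; simp [hA]⟩
    · rintro ⟨i, rfl⟩
      exact ⟨{i}, Finset.card_singleton i, by rw [hF]; simp [hA]⟩
  have herr : errP Φ 1 V = sSup (Set.range F) := by
    rw [errP, hset]
  have hbdd : BddAbove (Set.range F) := (Set.finite_range F).bddAbove
  have i₀ : Fin m := ⟨0, hm⟩
  have hne : (Set.range F).Nonempty := ⟨F i₀, ⟨i₀, rfl⟩⟩
  have hFle : ∀ i, F i ≤ sSup (Set.range F) := fun i => le_csSup hbdd ⟨i, rfl⟩
  have hτsum : ∑ i, τ i = ((l+t : ℕ) : ℝ) := by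
    have h1 : ∑ i, (A i).trace = ((l+t : ℕ) : 𝕜) := by
      rw [← Matrix.trace_sum]
      rw [hA]
      simp only []
      rw [hproto, Matrix.trace_one]
      simp
    calc ∑ i, τ i = RCLike.re (∑ i, (A i).trace) := by rw [map_sum]
      _ = ((l+t : ℕ) : ℝ) := by rw [h1]; simp
  have hlb_i : ∀ i, τ i * Φ.eta l ≤ F i := fun i =>
    MyAux.key_lb Φ hl (A i) (hpsd i) (hrk i)
  have hsumF : ((l+t : ℕ) : ℝ) * Φ.eta l ≤ ∑ i, F i := by
    calc ((l+t : ℕ) : ℝ) * Φ.eta l = ∑ i, τ i * Φ.eta l := by rw [← Finset.sum_mul, hτsum]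
      _ ≤ ∑ i, F i := Finset.sum_le_sum (fun i _ => hlb_i i)
  have hSup_lb : ((l+t : ℕ) : ℝ) * Φ.eta l / m ≤ sSup (Set.range F) := by
    rw [div_le_iff₀ hmpos]
    have h2 : ∑ i, F i ≤ ∑ _i : Fin m, sSup (Set.range F) :=
      Finset.sum_le_sum (fun i _ => hFle i)
    rw [Finset.sum_const, Finset.card_univ, Fintype.card_fin, nsmul_eq_mul] at h2
    calc ((l+t : ℕ) : ℝ) * Φ.eta l ≤ ∑ i, F i := hsumF
      _ ≤ (m : ℝ) * sSup (Set.range F) := h2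
      _ = sSup (Set.range F) * m := by ring
  have hηpos : 0 < Φ.eta l := by
    have hone : (1 : Matrix (Fin l) (Fin l) 𝕜) ≠ 0 := by
      intro h0
      have := congrFun (congrFun h0 ⟨0, hl⟩) ⟨0, hl⟩
      simp [Matrix.one_apply_eq] at this
    have hNpos : 0 < Φ.N l 1 :=
      lt_of_le_of_ne (Φ.nonneg l 1) (fun h0 => hone (Φ.eq_zero l 1 h0.symm))
    exact div_pos hNpos hlpos
  constructor
  · rw [herr]; exact hSup_lb
  · intro hS
    constructor
    · intro heq
      rw [herr] at heq
      have hF_le : ∀ i, F i ≤ ((l+t : ℕ) : ℝ) * Φ.eta l / m := fun i => heq ▸ hFle i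
      have hsum_le : ∑ i, F i ≤ ((l+t : ℕ) : ℝ) * Φ.eta l := by
        have h2 : ∑ i, F i ≤ ∑ _i : Fin m, ((l+t : ℕ) : ℝ) * Φ.eta l / m :=
          Finset.sum_le_sum (fun i _ => hF_le i)
        rw [Finset.sum_const, Finset.card_univ, Fintype.card_fin, nsmul_eq_mul] at h2
        calc ∑ i, F i ≤ (m : ℝ) * (((l+t : ℕ) : ℝ) * Φ.eta l / m) := h2
          _ = ((l+t : ℕ) : ℝ) * Φ.eta l := by field_simp
      have hsum_eq : ∑ i, F i = ((l+t : ℕ) : ℝ) * Φ.eta l := le_antisymm hsum_le hsumF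
      have hterm1 : ∀ i, F i = τ i * Φ.eta l := by
        have hzero : ∑ i, (F i - τ i * Φ.eta l) = 0 := by
          rw [Finset.sum_sub_distrib, hsum_eq, ← Finset.sum_mul, hτsum, sub_self]
        intro i
        have := (Finset.sum_eq_zero_iff_of_nonneg
          (fun i _ => sub_nonneg.mpr (hlb_i i))).mp hzero i (Finset.mem_univ i)
        linarith
      have hterm2 : ∀ i, F i = ((l+t : ℕ) : ℝ) * Φ.eta l / m := by
        have hzero : ∑ i, (((l+t : ℕ) : ℝ) * Φ.eta l / m - F i) = 0 := by
          rw [Finset.sum_sub_distrib, hsum_eq, Finset.sum_const, Finset.card_univ,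
            Fintype.card_fin, nsmul_eq_mul]
          field_simp
          ring
        intro i
        have := (Finset.sum_eq_zero_iff_of_nonneg
          (fun i _ => sub_nonneg.mpr (hF_le i))).mp hzero i (Finset.mem_univ i)
        linarith
      have hτ_eq : ∀ i, τ i = ((l+t : ℕ) : ℝ) / m := by
        intro i
        have h1 : τ i * Φ.eta l = (((l+t : ℕ) : ℝ) / m) * Φ.eta l := by
          rw [← hterm1 i, hterm2 i]; ring
        exact mul_right_cancel₀ hηpos.ne' h1
      refine ⟨hproto, fun i => ?_⟩
      obtain ⟨P, hP1, hP2, hPrk, hPA⟩ := MyAux.key_eq Φ hl hS (A i) (hpsd i) (hrk i)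
        (by rw [show RCLike.re (A i).trace = τ i from rfl,
          show Φ.N (l+t) (A i) = F i from rfl, hterm1 i])
      refine ⟨P, hP1, hP2, hPrk, ?_⟩
      have hAi : (V i)ᴴ * V i = A i := rfl
      rw [hAi, hPA]
      congr 1
      rw [show RCLike.re (A i).trace = τ i from rfl, hτ_eq i]
      have hm0 : (m : 𝕜) ≠ 0 := Nat.cast_ne_zero.mpr hm.ne'
      have hl0 : (l : 𝕜) ≠ 0 := Nat.cast_ne_zero.mpr hl.ne'
      push_cast
      field_simp
    · intro hUWP
      obtain ⟨_, hPi⟩ := hUWP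
      have hFval : ∀ i, F i = ((l+t : ℕ) : ℝ) * Φ.eta l / m := by
        intro i
        obtain ⟨P, hP1, hP2, hPrk, hPA⟩ := hPi i
        have hNP : Φ.N (l+t) P = (l : ℝ) * Φ.eta l := MyAux.N_herm_proj Φ hl P hP1 hP2 hPrk
        have hnorm : ‖((l+t : ℕ) : 𝕜) / ((m : 𝕜) * (l : 𝕜))‖ = ((l+t : ℕ) : ℝ) / ((m : ℝ) * (l : ℝ)) := by
          rw [norm_div, norm_mul, RCLike.norm_natCast, RCLike.norm_natCast, RCLike.norm_natCast]
        have : F i = ‖((l+t : ℕ) : 𝕜) / ((m : 𝕜) * (l : 𝕜))‖ * Φ.N (l+t) P := by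
          rw [hF]
          simp only []
          rw [hA]
          simp only []
          rw [hPA, Φ.smul_eq]
        rw [this, hnorm, hNP]
        field_simp
      rw [herr]
      apply le_antisymm
      · apply csSup_le hne
        rintro r ⟨i, rfl⟩
        rw [hFval i]
      · have := hFle i₀
        rw [hFval i₀] at this
        exact this
end
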